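/- Let p and q be coprime positive integers with p < q and pq even, and set ω = p + q. Then there exists a unique integer τ with 0 < 2τ < ω such that either 2pτ ≡ 1 (mod ω) or 2pτ ≡ −1 (mod ω). -/

import Mathlib

/-- An *even rational parameter* is a fraction `p/q` with `p, q` coprime positive
integers, `p < q`, and `p*q` even. -/
def EvenParam (p q : ℕ) : Prop :=
  Nat.Coprime p q ∧ 0 < p ∧ p < q ∧ Even (p * q)

/-- `τ` is the *tune* of `p/q`: `0 < 2τ < p+q` and `2pτ ≡ ±1 (mod p+q)`. -/
def IsTune (p q τ : ℕ) : Prop :=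
  0 < 2 * τ ∧ 2 * τ < p + q ∧
    (((p : ℤ) + q) ∣ 2 * p * τ - 1 ∨ ((p : ℤ) + q) ∣ 2 * p * τ + 1)

/-- `p'/q'` is the *even predecessor* of `p/q`. -/
def IsEvenPred (p q p' q' : ℕ) : Prop :=
  Nat.Coprime p' q' ∧ p' < q' ∧ Even (p' * q') ∧
    ((p : ℤ) * q' - (q : ℤ) * p').natAbs = 1 ∧ p' + q' < p + q

/-- `κ` is the unique nonnegative integer with `κ/(2κ+1) ≤ τ/(p+q) < (κ+1)/(2κ+3)`. -/
def IsKappa (p q τ κ : ℕ) : Prop :=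
  κ * (p + q) ≤ (2 * κ + 1) * τ ∧ (2 * κ + 3) * τ < (κ + 1) * (p + q)

/-- existence and uniqueness of the tune. -/
theorem tune_existsUnique (p q : ℕ) (hcop : Nat.Coprime p q) (hp : 0 < p)
    (hpq : p < q) (heven : Even (p * q)) :
    ∃! τ : ℕ, 0 < 2 * τ ∧ 2 * τ < p + q ∧
      (((p : ℤ) + q) ∣ 2 * p * τ - 1 ∨ ((p : ℤ) + q) ∣ 2 * p * τ + 1) := by
  have hω1 : 1 < p + q := by omega
  -- p+q is odd
  have hpar : p % 2 = 0 ∨ q % 2 = 0 := by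
    rcases Nat.even_mul.mp heven with h | h
    · left; exact Nat.even_iff.mp h
    · right; exact Nat.even_iff.mp h
  have hnboth : ¬ (p % 2 = 0 ∧ q % 2 = 0) := by
    rintro ⟨h1, h2⟩
    have : 2 ∣ Nat.gcd p q :=
      Nat.dvd_gcd (Nat.dvd_of_mod_eq_zero h1) (Nat.dvd_of_mod_eq_zero h2)
    rw [hcop.gcd_eq_one] at this
    omega
  have hωodd : (p + q) % 2 = 1 := by omega
  have hcop2 : Nat.Coprime (2 * p) (p + q) :=
    Nat.Coprime.mul (Nat.prime_two.coprime_iff_not_dvd.mpr (by omega))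
      (by simpa [Nat.add_comm] using Nat.coprime_add_self_right.mpr hcop)
  -- uniqueness core
  have hcopZ : IsCoprime ((p:ℤ)+q) (2*(p:ℤ)) := by
    have := Nat.isCoprime_iff_coprime.mpr hcop2
    push_cast at this
    exact this.symm
  have key : ∀ a b : ℕ, 0 < 2*a → 2*a < p+q → 0 < 2*b → 2*b < p+q →
      (((p:ℤ)+q) ∣ 2*p*a - 1 ∨ ((p:ℤ)+q) ∣ 2*p*a + 1) →
      (((p:ℤ)+q) ∣ 2*p*b - 1 ∨ ((p:ℤ)+q) ∣ 2*p*b + 1) → a = b := by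
    intro a b ha1 ha2 hb1 hb2 hda hdb
    have hdiff : (((p:ℤ)+q) ∣ 2*(p:ℤ)*((a:ℤ) - b)) → a = b := by
      intro h
      have hd : ((p:ℤ)+q) ∣ ((a:ℤ) - b) := hcopZ.dvd_of_dvd_mul_left h
      have : (a:ℤ) - b = 0 := by
        by_contra hne
        have h3 : ((p:ℤ)+q) ∣ |(a:ℤ)-b| := (dvd_abs _ _).mpr hd
        have h4 := Int.le_of_dvd (abs_pos.mpr hne) h3
        rcases abs_cases ((a:ℤ)-(b:ℤ)) with ⟨he,_⟩ | ⟨he,_⟩ <;> omega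
      omega
    have hsum : (((p:ℤ)+q) ∣ 2*(p:ℤ)*((a:ℤ) + b)) → a = b := by
      intro h
      have hd : ((p:ℤ)+q) ∣ ((a:ℤ) + b) := hcopZ.dvd_of_dvd_mul_left h
      have h4 := Int.le_of_dvd (by omega : (0:ℤ) < (a:ℤ) + b) hd
      omega
    rcases hda with h1 | h1 <;> rcases hdb with h2 | h2
    · exact hdiff (by have := dvd_sub h1 h2; convert this using 1; rfl; ring)
    · exact hsum (by have := dvd_add h1 h2; convert this using 1; rfl; ring)
    · exact hsum (by have := dvd_add h1 h2; convert this using 1; rfl; ring)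
    · exact hdiff (by have := dvd_sub h1 h2; convert this using 1; rfl; ring)
  -- existence
  haveI : NeZero (p + q) := ⟨by omega⟩
  haveI : Fact (1 < p + q) := ⟨hω1⟩
  set u := ZMod.unitOfCoprime (2*p) hcop2 with hu
  set x : ZMod (p+q) := ((u⁻¹ : (ZMod (p+q))ˣ) : ZMod (p+q)) with hx
  have hkey : ((2*p : ℕ) : ZMod (p+q)) * x = 1 := by
    rw [hx, hu, ← ZMod.coe_unitOfCoprime (2*p) hcop2, ← Units.val_mul,
      mul_inv_cancel, Units.val_one]
  set n := x.val with hn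
  have hn_lt : n < p + q := ZMod.val_lt x
  have hn_cast : ((n : ℕ) : ZMod (p+q)) = x := by
    rw [hn]; simp [ZMod.natCast_val, ZMod.cast_id]
  have hx_ne : x ≠ 0 := Units.ne_zero _
  have hn_pos : 0 < n := by
    rcases Nat.eq_zero_or_pos n with h0 | h
    · exact absurd (by rw [← hn_cast, h0, Nat.cast_zero]) hx_ne
    · exact h
  have hk : (2:ZMod (p+q)) * (p:ZMod (p+q)) * (n : ZMod (p+q)) = 1 := by
    push_cast at hkey
    rw [hn_cast]
    exact hkey
  have h2n : 2 * n ≠ p + q := by omega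
  have hexists : ∃ τ : ℕ, 0 < 2 * τ ∧ 2 * τ < p + q ∧
      (((p : ℤ) + q) ∣ 2 * p * τ - 1 ∨ ((p : ℤ) + q) ∣ 2 * p * τ + 1) := by
    rcases (by omega : 2*n < p+q ∨ p+q < 2*n) with hc | hc
    · refine ⟨n, by omega, hc, Or.inl ?_⟩
      have h0 : ((2*(p:ℤ)*n - 1 : ℤ) : ZMod (p+q)) = 0 := by
        push_cast
        linear_combination hk
      have := (ZMod.intCast_zmod_eq_zero_iff_dvd _ _).mp h0
      push_cast at this
      exact this
    · refine ⟨p + q - n, by omega, by omega, Or.inr ?_⟩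
      have h0 : ((2*(p:ℤ)*((p+q-n : ℕ):ℤ) + 1 : ℤ) : ZMod (p+q)) = 0 := by
        have hz : (p:ZMod (p+q)) + q = 0 := by
          have := ZMod.natCast_self (p+q); push_cast at this; exact this
        push_cast [Nat.cast_sub hn_lt.le]
        linear_combination 2*(p:ZMod (p+q))*hz - hk
      have := (ZMod.intCast_zmod_eq_zero_iff_dvd _ _).mp h0
      push_cast at this
      exact this
  obtain ⟨τ, hτ⟩ := hexists
  exact ⟨τ, hτ, fun y hy => key y τ hy.1 hy.2.1 hτ.1 hτ.2.1 hy.2.2 hτ.2.2⟩
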